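/- Let f : ℝⁿ → ℝ ∪ {∞} be lower semicontinuous and prox-regular at x̄ for x̄* ∈ ∂f(x̄) with parameter values r ≥ 0 and ε > 0, and let T denote the f-attentive ε-localization of ∂f around (x̄, x̄*). Then the graph of T is locally closed at each of its points: for every (x̂, x̂*) ∈ gph T there is δ > 0 such that gph T ∩ (closed ball of radius δ around (x̂, x̂*)) is closed. -/

import Mathlib

open scoped RealInnerProductSpace
open Filter Topology Metric Matrix

noncomputable section

abbrev En (n : ℕ) := EuclideanSpace ℝ (Fin n)

variable {n : ℕ}

/-- The regular (Fréchet) subdifferential of an extended-real-valued function. -/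
def FSubdiff (f : En n → EReal) (x : En n) : Set (En n) :=
  {v | ∀ c : ℝ, 0 < c → ∃ δ > (0:ℝ), ∀ y ∈ ball x δ,
    f x + ((⟪v, y - x⟫ - c * ‖y - x‖ : ℝ) : EReal) ≤ f y}

/-- The limiting (Mordukhovich) subdifferential, via f-attentive convergence. -/
def LSubdiff (f : En n → EReal) (x : En n) : Set (En n) :=
  {v | ∃ xs vs : ℕ → En n, (∀ k, vs k ∈ FSubdiff f (xs k)) ∧
    Tendsto xs atTop (𝓝 x) ∧ Tendsto (fun k => f (xs k)) atTop (𝓝 (f x)) ∧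
    Tendsto vs atTop (𝓝 v)}

/-- The graph of the f-attentive ε-localization of the subdifferential around (x̄, x̄*). -/
def GphT (f : En n → EReal) (xb xbs : En n) (ε : ℝ) : Set (En n × En n) :=
  {p | p.2 ∈ LSubdiff f p.1 ∧ f p.1 < f xb + (ε : EReal) ∧
       p.1 ∈ ball xb ε ∧ p.2 ∈ ball xbs ε}

/-- Prox-regularity of f at x̄ for x̄* with parameters r ≥ 0 and ε > 0. -/
def ProxReg (f : En n → EReal) (xb xbs : En n) (r ε : ℝ) : Prop :=
  (∃ a : ℝ, f xb = (a : EReal)) ∧ xbs ∈ LSubdiff f xb ∧ 0 ≤ r ∧ 0 < ε ∧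
  ∀ x' ∈ ball xb ε, ∀ p ∈ GphT f xb xbs ε,
    f p.1 + ((⟪p.2, x' - p.1⟫ - r / 2 * ‖x' - p.1‖ ^ 2 : ℝ) : EReal) ≤ f x'

/-- helper: move a real across an EReal inequality -/
lemma ereal_helper (A : EReal) (c b : ℝ) (h : A + (c:EReal) ≤ (b:EReal)) :
    A ≤ ((b - c : ℝ) : EReal) := by
  rw [EReal.coe_sub]
  exact (EReal.le_sub_iff_add_le (Or.inl (EReal.coe_ne_bot c))
    (Or.inl (EReal.coe_ne_top c))).2 h

/-- Under prox-regularity, points in the localized graph are Fréchet subgradients. -/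
lemma fsub_of_gphT {f : En n → EReal} {xb xbs : En n} {r ε : ℝ}
    (hpr : ProxReg f xb xbs r ε) {p : En n × En n} (hp : p ∈ GphT f xb xbs ε) :
    p.2 ∈ FSubdiff f p.1 := by
  obtain ⟨-, -, hr, hε, hkey⟩ := hpr
  intro c hc
  have hp1 : dist p.1 xb < ε := hp.2.2.1
  refine ⟨min (ε - dist p.1 xb) (2*c/(r+1)), lt_min (by linarith) (by positivity), ?_⟩
  intro y hy
  have hyb : y ∈ ball xb ε := by
    have h1 : dist y p.1 < min (ε - dist p.1 xb) (2*c/(r+1)) := hy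
    have h2 := dist_triangle y p.1 xb
    have := min_le_left (ε - dist p.1 xb) (2*c/(r+1))
    simp only [mem_ball]
    linarith
  have hk := hkey y hyb p hp
  refine le_trans ?_ hk
  have ht : ‖y - p.1‖ < 2*c/(r+1) := by
    have h1 : dist y p.1 < min (ε - dist p.1 xb) (2*c/(r+1)) := hy
    have := min_le_right (ε - dist p.1 xb) (2*c/(r+1))
    rw [dist_eq_norm] at h1
    linarith
  have hreal : (⟪p.2, y - p.1⟫ - c * ‖y - p.1‖ : ℝ) ≤ ⟪p.2, y - p.1⟫ - r / 2 * ‖y - p.1‖ ^ 2 := by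
    have htn : (0:ℝ) ≤ ‖y - p.1‖ := norm_nonneg _
    have h2 : ‖y - p.1‖ * (r+1) < 2*c :=
      (lt_div_iff₀ (by linarith : (0:ℝ) < r+1)).1 ht
    nlinarith [mul_le_mul_of_nonneg_left (le_of_lt h2) htn]
  exact add_le_add_right (EReal.coe_le_coe_iff.2 hreal) _

theorem stmt1 (f : En n → EReal) (xb xbs : En n) (r ε : ℝ)
    (hlsc : LowerSemicontinuous f) (hpr : ProxReg f xb xbs r ε) :
    ∀ p ∈ GphT f xb xbs ε, ∃ δ > (0:ℝ),
      IsClosed (GphT f xb xbs ε ∩ closedBall p δ) := by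
  obtain ⟨⟨a, ha⟩, hxbs, hr, hε, hkey⟩ := hpr
  intro p hp
  -- f xb + ε as a real
  have hfxb : f xb + (ε : EReal) = ((a + ε : ℝ) : EReal) := by
    rw [ha, ← EReal.coe_add]
  -- pick a real bound b with f p.1 < b < a + ε
  have hfp : f p.1 < ((a + ε : ℝ) : EReal) := by rw [← hfxb]; exact hp.2.1
  obtain ⟨b, hb1, hb2⟩ := EReal.exists_between_coe_real hfp
  have hb2' : b < a + ε := by exact_mod_cast hb2
  set C : ℝ := ‖xbs‖ + ε + r/2 + 1 with hC
  clear_value C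
  have hCpos : 0 < C := by rw [hC]; positivity
  have hd1 : dist p.1 xb < ε := hp.2.2.1
  have hd2 : dist p.2 xbs < ε := hp.2.2.2
  set δ : ℝ := min 1 (min ((ε - dist p.1 xb)/2)
    (min ((ε - dist p.2 xbs)/2) ((a + ε - b)/(2*C)))) with hδdef
  clear_value δ
  have hδpos : 0 < δ := by
    rw [hδdef]
    exact lt_min one_pos (lt_min (by linarith) (lt_min (by linarith)
      (div_pos (by linarith) (by positivity))))
  have hδ1 : δ ≤ 1 := hδdef ▸ min_le_left _ _
  have hδ2 : δ ≤ (ε - dist p.1 xb)/2 := hδdef ▸ le_trans (min_le_right _ _) (min_le_left _ _)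
  have hδ3 : δ ≤ (ε - dist p.2 xbs)/2 :=
    hδdef ▸ le_trans (min_le_right _ _) (le_trans (min_le_right _ _) (min_le_left _ _))
  have hδ4 : δ ≤ (a + ε - b)/(2*C) :=
    hδdef ▸ le_trans (min_le_right _ _) (le_trans (min_le_right _ _) (min_le_right _ _))
  refine ⟨δ, hδpos, ?_⟩
  apply IsSeqClosed.isClosed
  intro ps q hps hq
  have hqball : q ∈ closedBall p δ :=
    IsClosed.mem_of_tendsto Metric.isClosed_closedBall hq
      (Eventually.of_forall fun k => (hps k).2)
  have hq1 : Tendsto (fun k => (ps k).1) atTop (𝓝 q.1) :=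
    ((continuous_fst.tendsto q).comp hq)
  have hq2 : Tendsto (fun k => (ps k).2) atTop (𝓝 q.2) :=
    ((continuous_snd.tendsto q).comp hq)
  -- component distance bounds
  have hdx : ∀ k, dist (ps k).1 p.1 ≤ δ := fun k => by
    have h := (hps k).2
    rw [mem_closedBall, Prod.dist_eq] at h
    exact le_trans (le_max_left _ _) h
  have hdv : ∀ k, dist (ps k).2 p.2 ≤ δ := fun k => by
    have h := (hps k).2
    rw [mem_closedBall, Prod.dist_eq] at h
    exact le_trans (le_max_right _ _) h
  have hqd1 : dist q.1 p.1 ≤ δ := by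
    have h := hqball; rw [mem_closedBall, Prod.dist_eq] at h
    exact le_trans (le_max_left _ _) h
  have hqd2 : dist q.2 p.2 ≤ δ := by
    have h := hqball; rw [mem_closedBall, Prod.dist_eq] at h
    exact le_trans (le_max_right _ _) h
  -- the limit stays in the localization balls
  have hq1ball : q.1 ∈ ball xb ε := by
    rw [mem_ball]
    have := dist_triangle q.1 p.1 xb
    linarith
  have hq2ball : q.2 ∈ ball xbs ε := by
    rw [mem_ball]
    have := dist_triangle q.2 p.2 xbs
    linarith
  -- norm bound on the subgradients
  have hvnorm : ∀ k, ‖(ps k).2‖ ≤ ‖xbs‖ + ε := fun k => by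
    have h := (hps k).1.2.2.2
    rw [mem_ball, dist_eq_norm] at h
    have := norm_sub_norm_le ((ps k).2) xbs
    linarith
  -- uniform upper bound for f along the sequence
  have hub : ∀ k, f ((ps k).1) ≤ ((b + C*δ : ℝ) : EReal) := by
    intro k
    have hk := hkey p.1 hp.2.2.1 (ps k) (hps k).1
    have hk' : f ((ps k).1) +
        ((⟪(ps k).2, p.1 - (ps k).1⟫ - r/2 * ‖p.1 - (ps k).1‖^2 : ℝ) : EReal)
        ≤ (b : EReal) := le_trans hk hb1.le
    have h1 := ereal_helper _ _ _ hk'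
    refine le_trans h1 (EReal.coe_le_coe_iff.2 ?_)
    have hnx : ‖p.1 - (ps k).1‖ ≤ δ := by
      rw [← dist_eq_norm, dist_comm]; exact hdx k
    have hnn : (0:ℝ) ≤ ‖p.1 - (ps k).1‖ := norm_nonneg _
    have hip : |⟪(ps k).2, p.1 - (ps k).1⟫| ≤ (‖xbs‖ + ε) * δ := by
      refine le_trans (abs_real_inner_le_norm _ _) ?_
      have := hvnorm k
      nlinarith [norm_nonneg ((ps k).2)]
    have habs := abs_le.1 hip
    have ht2 : ‖p.1 - (ps k).1‖^2 ≤ δ := by nlinarith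
    have h5 : r/2 * ‖p.1 - (ps k).1‖^2 ≤ r/2 * δ :=
      mul_le_mul_of_nonneg_left ht2 (by linarith)
    have hCδ' : C*δ = (‖xbs‖ + ε)*δ + (r/2)*δ + δ := by rw [hC]; ring
    linarith [habs.1, hδpos.le]
  -- lsc gives the liminf bound
  have hliminf : f q.1 ≤ liminf (fun k => f ((ps k).1)) atTop := by
    rw [le_liminf_iff]
    exact fun y hy => hq1.eventually (hlsc q.1 y hy)
  -- f q.1 is bounded above
  have hfq_ub : f q.1 ≤ ((b + C*δ : ℝ) : EReal) := by
    refine le_trans hliminf ?_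
    calc liminf (fun k => f ((ps k).1)) atTop
        ≤ liminf (fun _ => ((b + C*δ : ℝ) : EReal)) atTop :=
          liminf_le_liminf (Eventually.of_forall hub)
      _ = ((b + C*δ : ℝ) : EReal) := liminf_const _
  have hCδ : C * δ ≤ (a + ε - b)/2 := by
    have h1 := mul_le_mul_of_nonneg_left hδ4 hCpos.le
    have h2 : C * ((a + ε - b)/(2*C)) = (a + ε - b)/2 := by
      field_simp
    linarith
  have hfq_lt : f q.1 < f xb + (ε : EReal) := by
    rw [hfxb]
    refine lt_of_le_of_lt hfq_ub (EReal.coe_lt_coe_iff.2 ?_)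
    linarith
  -- f-attentive convergence: f (ps k).1 → f q.1
  have hck : Tendsto (fun k => (⟪(ps k).2, q.1 - (ps k).1⟫
      - r/2 * ‖q.1 - (ps k).1‖^2 : ℝ)) atTop (𝓝 0) := by
    have h1 : Tendsto (fun k => q.1 - (ps k).1) atTop (𝓝 0) := by
      have := tendsto_const_nhds (α := ℕ) (x := q.1) |>.sub hq1
      simpa using this
    have h2 : Tendsto (fun k => (⟪(ps k).2, q.1 - (ps k).1⟫ : ℝ)) atTop (𝓝 (⟪q.2, (0 : En n)⟫)) :=
      hq2.inner h1
    have h3 : Tendsto (fun k => (‖q.1 - (ps k).1‖ : ℝ)) atTop (𝓝 ‖(0 : En n)‖) :=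
      h1.norm
    simp only [inner_zero_right, norm_zero] at h2 h3
    have := h2.sub ((tendsto_const_nhds (x := r/2)).mul (h3.pow 2))
    simpa using this
  have hfkey : ∀ k, f ((ps k).1) + ((⟪(ps k).2, q.1 - (ps k).1⟫
      - r/2 * ‖q.1 - (ps k).1‖^2 : ℝ) : EReal) ≤ f q.1 := fun k =>
    hkey q.1 hq1ball (ps k) (hps k).1
  have hftend : Tendsto (fun k => f ((ps k).1)) atTop (𝓝 (f q.1)) := by
    by_cases hbot : f q.1 = ⊥
    · have hall : ∀ k, f ((ps k).1) = ⊥ := by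
        intro k
        have := hfkey k
        rw [hbot, le_bot_iff, EReal.add_eq_bot_iff] at this
        exact this.resolve_right (EReal.coe_ne_bot _)
      have : (fun k => f ((ps k).1)) = fun _ => (⊥ : EReal) := funext hall
      rw [this, hbot]
      exact tendsto_const_nhds
    · have htop : f q.1 ≠ ⊤ := by
        intro h; rw [h] at hfq_ub; exact (EReal.coe_ne_top _) (top_le_iff.1 hfq_ub)
      set m : ℝ := (f q.1).toReal with hm
      have hmq : ((m : ℝ) : EReal) = f q.1 := EReal.coe_toReal htop hbot
      rw [← hmq]
      refine tendsto_of_le_liminf_of_limsup_le ?_ ?_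
      · rw [hmq]; exact hliminf
      · have hle : ∀ k, f ((ps k).1) ≤ ((m - (⟪(ps k).2, q.1 - (ps k).1⟫
            - r/2 * ‖q.1 - (ps k).1‖^2) : ℝ) : EReal) := fun k =>
          ereal_helper _ _ _ (by rw [hmq]; exact hfkey k)
        calc limsup (fun k => f ((ps k).1)) atTop
            ≤ limsup (fun k => ((m - (⟪(ps k).2, q.1 - (ps k).1⟫
              - r/2 * ‖q.1 - (ps k).1‖^2) : ℝ) : EReal)) atTop :=
              limsup_le_limsup (Eventually.of_forall hle)
          _ = ((m : ℝ) : EReal) := by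
              refine Tendsto.limsup_eq ?_
              rw [EReal.tendsto_coe]
              have := (tendsto_const_nhds (x := m)).sub hck
              simpa using this
  -- limiting subgradient at the limit point
  have hlsub : q.2 ∈ LSubdiff f q.1 := by
    refine ⟨fun k => (ps k).1, fun k => (ps k).2, fun k => ?_, hq1, hftend, hq2⟩
    exact fsub_of_gphT ⟨⟨a, ha⟩, hxbs, hr, hε, hkey⟩ (hps k).1
  exact ⟨⟨hlsub, hfq_lt, hq1ball, hq2ball⟩, hqball⟩
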